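/- The discriminant of the ℤ-basis (T₁, T₂, T₃, T₅, T₁₁) of W with respect to the trace form of W over ℤ (i.e. Algebra.discr ℤ applied to this basis of the commutative ring W, which is finite free of rank 5 over ℤ) equals 2¹¹ · 3 = 6144. -/

import Mathlib

abbrev Rng : Type := ℤ × Zsqrtd 2 × Zsqrtd 3

def Wset : Set Rng :=
  {p | p.1 ≡ p.2.1.re [ZMOD 2] ∧ p.1 ≡ p.2.2.re + p.2.2.im [ZMOD 2] ∧
       p.2.1.im ≡ p.2.2.im [ZMOD 2]}

private lemma modeq_iff (a b : ℤ) : a ≡ b [ZMOD 2] ↔ ((a : ZMod 2) = b) :=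
  (ZMod.intCast_eq_intCast_iff a b 2).symm

def W : Subring Rng where
  carrier := Wset
  zero_mem' := by refine ⟨?_, ?_, ?_⟩ <;> decide
  one_mem' := by refine ⟨?_, ?_, ?_⟩ <;> decide
  add_mem' := by
    rintro a b ⟨h1, h2, h3⟩ ⟨g1, g2, g3⟩
    refine ⟨h1.add g1, ?_, h3.add g3⟩
    simpa [add_add_add_comm] using h2.add g2
  neg_mem' := by
    rintro a ⟨h1, h2, h3⟩
    refine ⟨h1.neg, ?_, h3.neg⟩
    have := h2.neg
    simp only [Wset, Set.mem_setOf_eq, Prod.fst_neg, Prod.snd_neg, Zsqrtd.re_neg,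
      Zsqrtd.im_neg, Int.modEq_iff_dvd] at this ⊢
    omega
  mul_mem' := by
    rintro a b ⟨h1, h2, h3⟩ ⟨g1, g2, g3⟩
    simp only [Wset, Set.mem_setOf_eq, Prod.fst_mul, Prod.snd_mul, Zsqrtd.re_mul,
      Zsqrtd.im_mul, modeq_iff] at h1 h2 h3 g1 g2 g3 ⊢
    push_cast at h1 h2 h3 g1 g2 g3 ⊢
    have h0 : (2 : ZMod 2) = 0 := rfl
    refine ⟨?_, ?_, ?_⟩
    · rw [← h1, ← g1, h0]; ring
    · linear_combination (b.1 : ZMod 2) * h2 + ((a.2.2.re : ZMod 2) + a.2.2.im) * g2 -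
        ((a.2.2.im : ZMod 2) * b.2.2.im) * h0
    · linear_combination (b.2.1.im : ZMod 2) * h2 - (b.2.1.im : ZMod 2) * h1
        + (b.2.1.re : ZMod 2) * h3 + ((a.2.2.re : ZMod 2) + a.2.2.im) * g3
        + (a.2.2.im : ZMod 2) * g2 - (a.2.2.im : ZMod 2) * g1
        + ((a.2.2.im : ZMod 2) * b.2.2.im) * h0

lemma mem_W_iff (x : Rng) : x ∈ W ↔ x ∈ Wset := Iff.rfl

/-- The basis `T₁ = (1,1,1)`, `T₂ = (−1, −1+√2, √3)`, `T₃ = (−2, √2, 1−√3)`,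
`T₅ = (−1, 1, −1)`, `T₁₁ = (2, 2−√2, −3+√3)` of `W`. -/
def Tb : Fin 5 → W :=
  ![⟨((1 : ℤ), (⟨1, 0⟩ : Zsqrtd 2), (⟨1, 0⟩ : Zsqrtd 3)), by
      rw [mem_W_iff]; refine ⟨?_, ?_, ?_⟩ <;> decide⟩,
    ⟨((-1 : ℤ), (⟨-1, 1⟩ : Zsqrtd 2), (⟨0, 1⟩ : Zsqrtd 3)), by
      rw [mem_W_iff]; refine ⟨?_, ?_, ?_⟩ <;> decide⟩,
    ⟨((-2 : ℤ), (⟨0, 1⟩ : Zsqrtd 2), (⟨1, -1⟩ : Zsqrtd 3)), by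
      rw [mem_W_iff]; refine ⟨?_, ?_, ?_⟩ <;> decide⟩,
    ⟨((-1 : ℤ), (⟨1, 0⟩ : Zsqrtd 2), (⟨-1, 0⟩ : Zsqrtd 3)), by
      rw [mem_W_iff]; refine ⟨?_, ?_, ?_⟩ <;> decide⟩,
    ⟨((2 : ℤ), (⟨2, -1⟩ : Zsqrtd 2), (⟨-3, 1⟩ : Zsqrtd 3)), by
      rw [mem_W_iff]; refine ⟨?_, ?_, ?_⟩ <;> decide⟩]

/-- Multiplication matrices: `Mm i` is the matrix of left multiplication by `Tb i`
in the basis `Tb`. -/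
def Mm : Fin 5 → Matrix (Fin 5) (Fin 5) ℤ :=
  ![!![1, 0, 0, 0, 0;
     0, 1, 0, 0, 0;
     0, 0, 1, 0, 0;
     0, 0, 0, 1, 0;
     0, 0, 0, 0, 1],
   !![0, 3, 0, -1, -2;
     1, -1, 0, 0, 0;
     0, -4, 0, 3, 5;
     0, 5, 0, -4, -6;
     0, -3, 1, 2, 2],
   !![0, 0, 2, 0, -2;
     0, 0, -1, 1, 3;
     1, 0, 2, 2, 0;
     0, 0, -3, -3, 1;
     0, 1, 1, 2, 1],
   !![0, -1, 0, 1, 2;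
     0, 0, 1, 0, -1;
     0, 3, 2, 0, -3;
     1, -4, -3, 0, 5;
     0, 2, 2, 0, -3],
   !![0, -2, -2, 2, 6;
     0, 0, 3, -1, -5;
     0, 5, 0, -3, -4;
     0, -6, 1, 5, 5;
     1, 2, 1, -3, -5]]

private lemma Tb_li : LinearIndependent ℤ Tb := by
  rw [Fintype.linearIndependent_iff]
  intro g hg
  have h := congrArg Subtype.val hg
  simp [Fin.sum_univ_five, Tb, Prod.ext_iff, Zsqrtd.ext_iff, zsmul_eq_mul,
    Zsqrtd.re_smul, Zsqrtd.im_smul, Zsqrtd.re_add, Zsqrtd.im_add] at h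
  obtain ⟨h1, ⟨h2, h3⟩, h4, h5⟩ := h
  have e : g 0 = 0 ∧ g 1 = 0 ∧ g 2 = 0 ∧ g 3 = 0 ∧ g 4 = 0 := by omega
  intro i
  fin_cases i
  exacts [e.1, e.2.1, e.2.2.1, e.2.2.2.1, e.2.2.2.2]

private lemma Tb_span : ⊤ ≤ Submodule.span ℤ (Set.range Tb) := by
  rintro ⟨⟨a, ⟨b1, b2⟩, ⟨c1, c2⟩⟩, hx⟩ -
  obtain ⟨h1, h2, h3⟩ := hx
  simp only [Int.ModEq] at h1 h2 h3
  obtain ⟨u, hu⟩ : ∃ u : ℤ, b1 = a + 2 * u := ⟨(b1 - a) / 2, by omega⟩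
  obtain ⟨v, hv⟩ : ∃ v : ℤ, c1 + c2 = a + 2 * v := ⟨(c1 + c2 - a) / 2, by omega⟩
  obtain ⟨w, hw⟩ : ∃ w : ℤ, c2 = b2 + 2 * w := ⟨(c2 - b2) / 2, by omega⟩
  rw [Submodule.mem_span_range_iff_exists_fun]
  refine ⟨![a + u + v, b2 + w, b2 - v - w, u + v + w - b2, b2 - v], ?_⟩
  apply Subtype.ext
  simp [Fin.sum_univ_five, Tb, Prod.ext_iff, Zsqrtd.ext_iff, zsmul_eq_mul,
    Zsqrtd.re_smul, Zsqrtd.im_smul, Zsqrtd.re_add, Zsqrtd.im_add]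
  refine ⟨by omega, ⟨by omega, by omega⟩, by omega, by omega⟩

/-- The family `Tb` as a `ℤ`-basis of `W`. -/
noncomputable def Bb : Module.Basis (Fin 5) ℤ W := Module.Basis.mk Tb_li Tb_span

private lemma hmul (i j : Fin 5) : Tb i * Tb j = ∑ k, Mm i k j • Tb k := by
  fin_cases i <;> fin_cases j <;>
    (apply Subtype.ext;
     simp only [AddSubmonoidClass.coe_finset_sum, SetLike.val_smul, Fin.sum_univ_five,
       MulMemClass.coe_mul, Tb, Mm, Matrix.cons_val_zero, Matrix.cons_val_one,
       Matrix.head_cons, Matrix.cons_val_two, Matrix.tail_cons, Matrix.cons_val_three,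
       Matrix.cons_val_four, Matrix.cons_val', Matrix.of_apply, Matrix.empty_val',
       Matrix.cons_val_fin_one, Matrix.head_fin_const];
     decide)

private lemma hleft (i : Fin 5) : Algebra.leftMulMatrix Bb (Tb i) = Mm i := by
  have hB : ∀ k, Bb k = Tb k := fun k => Module.Basis.mk_apply Tb_li Tb_span k
  ext k j
  rw [Algebra.leftMulMatrix_eq_repr_mul, hB, hmul]
  simp_rw [← hB]
  exact congrFun (Bb.repr_sum_self fun k => Mm i k j) k

private lemma htrace (i j : Fin 5) :
    Algebra.trace ℤ W (Tb i * Tb j) = Matrix.trace (Mm i * Mm j) := by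
  rw [Algebra.trace_eq_matrix_trace Bb, map_mul, hleft, hleft]

/-- The discriminant of the `ℤ`-basis `(T₁, T₂, T₃, T₅, T₁₁)` of `W` with respect to the
trace form of `W` over `ℤ` equals `2¹¹ · 3 = 6144`. -/
theorem stmt3 : Algebra.discr ℤ Tb = 2 ^ 11 * 3 ∧ ((2 : ℤ) ^ 11 * 3 = 6144) := by
  refine ⟨?_, by norm_num⟩
  rw [Algebra.discr_def]
  have hTM : Algebra.traceMatrix ℤ Tb =
      !![5, -3, 0, -1, 0;
     -3, 13, 0, -1, -4;
     0, 0, 16, 0, -20;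
     -1, -1, 0, 5, 8;
     0, -4, -20, 8, 40] := by
    ext i j
    rw [Algebra.traceMatrix_apply, Algebra.traceForm_apply, htrace]
    fin_cases i <;> fin_cases j <;> decide
  rw [hTM]
  norm_num [Matrix.det_succ_row_zero, Fin.sum_univ_succ]
  decide
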